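/- Under the bijection Φ from permutation tableaux contained in a k×(n-k) rectangle to permutations in S_n with k weak excedances, the number of 2's of a tableau T (i.e., the number of boxes of the rectangle not in the Young diagram of T) equals A_NE(Φ(T)), the number of alignments of type NE of the permutation. -/

import Mathlib

open Finset


def wexB {n : ℕ} (π : Equiv.Perm (Fin n)) : Finset (Fin n) :=
  Finset.univ.filter (fun i => i ≤ π i)

def wex {n : ℕ} (π : Equiv.Perm (Fin n)) : ℕ := (wexB π).card

def wexbotsum {n : ℕ} (π : Equiv.Perm (Fin n)) : ℕ := ∑ i ∈ wexB π, (i.val + 1)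

def wextopsum {n : ℕ} (π : Equiv.Perm (Fin n)) : ℕ := ∑ i ∈ wexB π, ((π i).val + 1)

def wexbotsSet {n : ℕ} (π : Equiv.Perm (Fin n)) : Finset ℕ :=
  (wexB π).image (fun i => i.val + 1)

def wextopsSet {n : ℕ} (π : Equiv.Perm (Fin n)) : Finset ℕ :=
  (wexB π).image (fun i => (π i).val + 1)

/-- `A_EE`: pairs `(i,j)` with `j < i ≤ π i < π j`. -/
def AEE {n : ℕ} (π : Equiv.Perm (Fin n)) : ℕ :=
  (Finset.univ.filter (fun p : Fin n × Fin n =>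
    p.2 < p.1 ∧ p.1 ≤ π p.1 ∧ π p.1 < π p.2)).card

/-- `A_NN`: pairs `(i,j)` with `π j < π i < i < j`. -/
def ANN {n : ℕ} (π : Equiv.Perm (Fin n)) : ℕ :=
  (Finset.univ.filter (fun p : Fin n × Fin n =>
    π p.2 < π p.1 ∧ π p.1 < p.1 ∧ p.1 < p.2)).card

/-- `A_EN`: pairs `(i,j)` with `j ≤ π j < π i < i`. -/
def AEN {n : ℕ} (π : Equiv.Perm (Fin n)) : ℕ :=
  (Finset.univ.filter (fun p : Fin n × Fin n =>
    p.2 ≤ π p.2 ∧ π p.2 < π p.1 ∧ π p.1 < p.1)).card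

/-- `A_NE`: pairs `(i,j)` with `π i < i < j ≤ π j`. -/
def ANE {n : ℕ} (π : Equiv.Perm (Fin n)) : ℕ :=
  (Finset.univ.filter (fun p : Fin n × Fin n =>
    π p.1 < p.1 ∧ p.1 < p.2 ∧ p.2 ≤ π p.2)).card

/-- `C_EE`: pairs `(i,j)` with `j < i ≤ π j < π i`. -/
def CEE {n : ℕ} (π : Equiv.Perm (Fin n)) : ℕ :=
  (Finset.univ.filter (fun p : Fin n × Fin n =>
    p.2 < p.1 ∧ p.1 ≤ π p.2 ∧ π p.2 < π p.1)).card

/-- `C_NN`: pairs `(i,j)` with `π i < π j < i < j`. -/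
def CNN {n : ℕ} (π : Equiv.Perm (Fin n)) : ℕ :=
  (Finset.univ.filter (fun p : Fin n × Fin n =>
    π p.1 < π p.2 ∧ π p.2 < p.1 ∧ p.1 < p.2)).card

def descents {n : ℕ} (π : Equiv.Perm (Fin n)) : Finset (Fin n) :=
  Finset.univ.filter (fun i => ∃ h : i.val + 1 < n, π ⟨i.val + 1, h⟩ < π i)

def des {n : ℕ} (π : Equiv.Perm (Fin n)) : ℕ := (descents π).card

def destopsum {n : ℕ} (π : Equiv.Perm (Fin n)) : ℕ :=
  ∑ i ∈ descents π, ((π i).val + 1)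

def desbotsum {n : ℕ} (π : Equiv.Perm (Fin n)) : ℕ :=
  ∑ i ∈ descents π, (if h : i.val + 1 < n then (π ⟨i.val + 1, h⟩).val + 1 else 0)

def destopsSet {n : ℕ} (π : Equiv.Perm (Fin n)) : Finset ℕ :=
  (descents π).image (fun i => (π i).val + 1)

def desbotsSet {n : ℕ} (π : Equiv.Perm (Fin n)) : Finset ℕ :=
  (descents π).image
    (fun i => if h : i.val + 1 < n then (π ⟨i.val + 1, h⟩).val + 1 else 0)

def maj {n : ℕ} (π : Equiv.Perm (Fin n)) : ℕ := ∑ i ∈ descents π, (i.val + 1)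

/-- Occurrences of the generalized pattern `(2-31)`. -/
def P2d31 {n : ℕ} (π : Equiv.Perm (Fin n)) : ℕ :=
  (Finset.univ.filter (fun p : Fin n × Fin n =>
    p.1 < p.2 ∧ ∃ h : p.2.val + 1 < n,
      π ⟨p.2.val + 1, h⟩ < π p.1 ∧ π p.1 < π p.2)).card

/-- Occurrences of the generalized pattern `(31-2)`. -/
def P31d2 {n : ℕ} (π : Equiv.Perm (Fin n)) : ℕ :=
  (Finset.univ.filter (fun p : Fin n × Fin n =>
    ∃ h : p.1.val + 1 < n, π ⟨p.1.val + 1, h⟩ < π p.1 ∧ p.1.val + 1 < p.2.val ∧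
      π ⟨p.1.val + 1, h⟩ < π p.2 ∧ π p.2 < π p.1)).card

/-- Occurrences of the generalized pattern `(21-3)`. -/
def P21d3 {n : ℕ} (π : Equiv.Perm (Fin n)) : ℕ :=
  (Finset.univ.filter (fun p : Fin n × Fin n =>
    ∃ h : p.1.val + 1 < n, π ⟨p.1.val + 1, h⟩ < π p.1 ∧ p.1.val + 1 < p.2.val ∧
      π p.1 < π p.2)).card

/-- Occurrences of the generalized pattern `(3-21)`. -/
def P3d21 {n : ℕ} (π : Equiv.Perm (Fin n)) : ℕ :=
  (Finset.univ.filter (fun p : Fin n × Fin n =>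
    p.1 < p.2 ∧ ∃ h : p.2.val + 1 < n,
      π ⟨p.2.val + 1, h⟩ < π p.2 ∧ π p.2 < π p.1)).card

/-- Occurrences of the generalized pattern `(1-32)`. -/
def P1d32 {n : ℕ} (π : Equiv.Perm (Fin n)) : ℕ :=
  (Finset.univ.filter (fun p : Fin n × Fin n =>
    p.1 < p.2 ∧ ∃ h : p.2.val + 1 < n,
      π ⟨p.2.val + 1, h⟩ < π p.2 ∧ π p.1 < π ⟨p.2.val + 1, h⟩)).card

/-- Occurrences of the generalized pattern `(32-1)`. -/
def P32d1 {n : ℕ} (π : Equiv.Perm (Fin n)) : ℕ :=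
  (Finset.univ.filter (fun p : Fin n × Fin n =>
    ∃ h : p.1.val + 1 < n, π ⟨p.1.val + 1, h⟩ < π p.1 ∧ p.1.val + 1 < p.2.val ∧
      π p.2 < π ⟨p.1.val + 1, h⟩)).card


/-- A permutation tableau with `n-k` columns, encoded as a `{0,1,2}`-filling of the full
`k × m` rectangle: the `2`'s are the boxes outside the Young diagram (southeast corner). -/
def IsPermTableau {k m : ℕ} (T : Fin k → Fin m → Fin 3) : Prop :=
  (∀ j : Fin m, ∃ i : Fin k, T i j = 1) ∧
  (∀ (i : Fin k) (j : Fin m), T i j ≠ 2 →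
    ∀ (i' : Fin k) (j' : Fin m), i' ≤ i → j' ≤ j → T i' j' ≠ 2) ∧
  (∀ (i : Fin k) (j : Fin m), T i j = 0 →
    ¬ ((∃ i' < i, T i' j = 1) ∧ (∃ j' < j, T i j' = 1)))

def rowLen {k m : ℕ} (T : Fin k → Fin m → Fin 3) (i : Fin k) : ℕ :=
  (Finset.univ.filter (fun j => T i j ≠ 2)).card

def zerosT {k m : ℕ} (T : Fin k → Fin m → Fin 3) : ℕ :=
  ∑ i, (Finset.univ.filter (fun j => T i j = 0)).card

def onesT {k m : ℕ} (T : Fin k → Fin m → Fin 3) : ℕ :=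
  ∑ i, (Finset.univ.filter (fun j => T i j = 1)).card

def twosT {k m : ℕ} (T : Fin k → Fin m → Fin 3) : ℕ :=
  ∑ i, (Finset.univ.filter (fun j => T i j = 2)).card

/-- A valid `0/1`-filling of the Young diagram with row lengths `lam`. -/
def ValidFilling {k : ℕ} (lam : Fin k → ℕ) (F : ∀ i : Fin k, Fin (lam i) → Bool) : Prop :=
  (∀ (i : Fin k) (j : Fin (lam i)), ∃ (i' : Fin k) (h : (j : ℕ) < lam i'), F i' ⟨j, h⟩ = true) ∧
  (∀ (i : Fin k) (j : Fin (lam i)), F i j = false →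
    ¬ ((∃ (i' : Fin k) (h : (j : ℕ) < lam i'), i' < i ∧ F i' ⟨j, h⟩ = true) ∧
       (∃ j' : Fin (lam i), j' < j ∧ F i j' = true)))

def fillZeros {k : ℕ} {lam : Fin k → ℕ} (F : ∀ i : Fin k, Fin (lam i) → Bool) : ℕ :=
  ∑ i, (Finset.univ.filter (fun j => F i j = false)).card

def fillOnes {k : ℕ} {lam : Fin k → ℕ} (F : ∀ i : Fin k, Fin (lam i) → Bool) : ℕ :=
  ∑ i, (Finset.univ.filter (fun j => F i j = true)).card

open Classical in
/-- `F_λ(p,q)`, evaluated at integers `p`, `q`: the sum over valid fillings of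
`p ^ (#0's) * q ^ (#1's)`. -/
noncomputable def Fval {k : ℕ} (lam : Fin k → ℕ) (p q : ℤ) : ℤ :=
  ∑ F ∈ Finset.univ.filter
      (fun F : ∀ i : Fin k, Fin (lam i) → Bool => ValidFilling lam F),
    p ^ fillZeros F * q ^ fillOnes F

theorem twos_eq_ANE (n k : ℕ) (hk : k ≤ n) (T : Fin k → Fin (n - k) → Fin 3)
    (hT : IsPermTableau T) (π : Equiv.Perm (Fin n))
    (hΦ : wexbotsSet π =
      Finset.univ.image (fun i : Fin k => n - k - rowLen T i + i.val + 1)) :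
    twosT T = ANE π := by
  classical
  set W := wexB π with hW
  set f : Fin k → ℕ := fun i => n - k - rowLen T i + i.val with hf
  -- rows weakly decreasing
  have hrow : ∀ i i' : Fin k, i' ≤ i → rowLen T i ≤ rowLen T i' := by
    intro i i' h
    apply Finset.card_le_card
    intro j hj
    simp only [mem_filter, mem_univ, true_and] at hj ⊢
    exact hT.2.1 i j hj i' j h le_rfl
  have hrowle : ∀ i, rowLen T i ≤ n - k := by
    intro i
    simpa [rowLen] using (Finset.card_filter_le (univ : Finset (Fin (n - k))) (fun j => T i j ≠ 2))
  have hfmono : StrictMono f := by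
    intro s t hst
    have h1 : n - k - rowLen T s ≤ n - k - rowLen T t :=
      Nat.sub_le_sub_left (hrow t s (le_of_lt hst)) (n - k)
    have h2 : s.val < t.val := hst
    simp only [hf]
    omega
  have hginj : Function.Injective (fun i : Fin k => f i + 1) := by
    intro a b h
    exact hfmono.injective (Nat.succ_injective h)
  have hΦ' : wexbotsSet π = Finset.univ.image (fun i : Fin k => f i + 1) := hΦ
  have hvinj : Set.InjOn (fun i : Fin n => i.val + 1) W := by
    intro a _ b _ h
    exact Fin.val_injective (Nat.succ_injective h)
  have hcardW : W.card = k := by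
    have h1 : (wexbotsSet π).card = W.card := Finset.card_image_of_injOn hvinj
    have h2 : (Finset.univ.image (fun i : Fin k => f i + 1)).card = k := by
      rw [Finset.card_image_of_injective _ hginj, card_univ, Fintype.card_fin]
    rw [hΦ', h2] at h1
    omega
  -- sum identity from hΦ
  have hAB : (∑ b ∈ W, b.val) = ∑ i : Fin k, f i := by
    have h1 : ∑ x ∈ wexbotsSet π, x = ∑ b ∈ W, (b.val + 1) :=
      Finset.sum_image hvinj
    have h2 : ∑ x ∈ Finset.univ.image (fun i : Fin k => f i + 1), x
        = ∑ i : Fin k, (f i + 1) :=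
      Finset.sum_image (fun a _ b _ h => hginj h)
    have key : ∑ b ∈ W, (b.val + 1) = ∑ i : Fin k, (f i + 1) := by
      rw [← h1, hΦ', h2]
    rw [Finset.sum_add_distrib, Finset.sum_add_distrib, Finset.sum_const,
      Finset.sum_const, hcardW, card_univ, Fintype.card_fin] at key
    omega
  -- twosT in terms of f
  have h2s : twosT T + (∑ i : Fin k, i.val) = ∑ i : Fin k, f i := by
    rw [twosT, ← Finset.sum_add_distrib]
    apply Finset.sum_congr rfl
    intro i _
    have hpair := Finset.card_filter_add_card_filter_not
      (s := (univ : Finset (Fin (n - k)))) (p := fun j => T i j = 2)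
    have hneg : (univ.filter (fun j => ¬ T i j = 2)).card = rowLen T i := by
      rw [rowLen]
    rw [hneg, Finset.card_univ, Fintype.card_fin] at hpair
    have := hrowle i
    simp only [hf]
    omega
  -- ANE as a sum over W
  have hANEsum : ANE π = ∑ j ∈ W, (univ.filter (fun i => π i < i ∧ i < j)).card := by
    rw [ANE, Finset.card_filter, Fintype.sum_prod_type]
    rw [Finset.sum_comm]
    have step : ∀ j : Fin n,
        (∑ i : Fin n, if π i < i ∧ i < j ∧ j ≤ π j then 1 else 0)
        = if j ≤ π j then (univ.filter (fun i => π i < i ∧ i < j)).card else 0 := by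
      intro j
      by_cases hj : j ≤ π j
      · simp only [hj, if_true, Finset.card_filter]
        apply Finset.sum_congr rfl
        intro i _
        by_cases h1 : π i < i ∧ i < j
        · simp [h1, hj]
        · have h2 : ¬ (π i < i ∧ i < j ∧ j ≤ π j) := fun hc => h1 ⟨hc.1, hc.2.1⟩
          simp [h1, h2]
      · simp only [hj, if_false]
        apply Finset.sum_eq_zero
        intro i _
        simp [hj]
    calc (∑ j : Fin n, ∑ i : Fin n, if π i < i ∧ i < j ∧ j ≤ π j then 1 else 0)
        = ∑ j : Fin n, if j ≤ π j then (univ.filter (fun i => π i < i ∧ i < j)).card else 0 := by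
          exact Finset.sum_congr rfl (fun j _ => step j)
      _ = ∑ j ∈ W, (univ.filter (fun i => π i < i ∧ i < j)).card := by
          rw [hW, wexB, Finset.sum_filter]
  -- per-j decomposition
  have hperj : ∀ j ∈ W,
      (univ.filter (fun i => π i < i ∧ i < j)).card
        + (W.filter (fun i => i < j)).card = j.val := by
    intro j hj
    have hcard : (univ.filter (fun i : Fin n => i < j)).card = j.val := by
      have h : univ.filter (fun i : Fin n => i < j) = Finset.Iio j := by ext x; simp
      rw [h, Fin.card_Iio]
    have hpair := Finset.card_filter_add_card_filter_not
      (s := univ.filter (fun i : Fin n => i < j)) (p := fun i => i ≤ π i)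
    rw [Finset.filter_filter, Finset.filter_filter, hcard] at hpair
    have e1 : (univ.filter (fun i : Fin n => i < j ∧ ¬ i ≤ π i))
        = univ.filter (fun i => π i < i ∧ i < j) := by
      ext x; simp only [mem_filter, mem_univ, true_and, not_le]; tauto
    have e2 : (univ.filter (fun i : Fin n => i < j ∧ i ≤ π i))
        = W.filter (fun i => i < j) := by
      rw [hW, wexB, Finset.filter_filter]
      ext x; simp only [mem_filter, mem_univ, true_and]; tauto
    rw [e1, e2] at hpair
    omega
  have hANE2 : ANE π + (∑ j ∈ W, (W.filter (fun i => i < j)).card) = ∑ b ∈ W, b.val := by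
    rw [hANEsum, ← Finset.sum_add_distrib]
    exact Finset.sum_congr rfl hperj
  -- double counting
  set C2 := ∑ j ∈ W, (W.filter (fun i => i < j)).card with hC2
  have hC2two : C2 * 2 = k * (k - 1) := by
    have hx : C2 = ∑ j ∈ W, ∑ i ∈ W, if i < j then 1 else 0 := by
      apply Finset.sum_congr rfl
      intro j _
      rw [Finset.card_filter]
    have hy : C2 = ∑ j ∈ W, ∑ i ∈ W, if j < i then 1 else 0 := by
      rw [hx]; exact Finset.sum_comm
    have hsum : C2 * 2 = ∑ j ∈ W, ∑ i ∈ W,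
        ((if i < j then 1 else 0) + (if j < i then 1 else 0)) := by
      simp only [Finset.sum_add_distrib]
      omega
    rw [hsum]
    have hz : ∀ j ∈ W, (∑ i ∈ W, ((if i < j then 1 else 0) + (if j < i then 1 else 0)))
        = k - 1 := by
      intro j hj
      have hterm : ∀ i ∈ W, ((if i < j then 1 else 0) + (if j < i then 1 else 0))
          = if i ≠ j then 1 else 0 := by
        intro i _
        rcases lt_trichotomy i j with h | h | h
        · simp [h, not_lt_of_gt h, ne_of_lt h]
        · simp [h]
        · simp [h, not_lt_of_gt h, (ne_of_lt h).symm]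
      rw [Finset.sum_congr rfl hterm, ← Finset.card_filter, Finset.filter_ne',
        Finset.card_erase_of_mem hj, hcardW]
    rw [Finset.sum_congr rfl hz, Finset.sum_const, hcardW, smul_eq_mul]
  have hDtwo : (∑ t : Fin k, t.val) * 2 = k * (k - 1) := by
    rw [Fin.sum_univ_eq_sum_range (fun i => i), Finset.sum_range_id_mul_two]
  omega
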